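/- arXiv:1405.2224 — 3 statements merged into one kernel-verified Lean document; each statement's English description precedes it below -/
import Mathlib

section
/- In a triangle ABC with cevian AD from vertex A to a point D strictly between B and C, if (AB + BD)(AC − CD) = AD², then AD bisects angle BAC. -/
open EuclideanGeometry

/-- If in triangle `ABC`, with `D` strictly between `B` and `C`, the cevian `AD` satisfies
`(AB + BD)(AC − CD) = AD²`, then `AD` bisects the angle `BAC`. -/
theorem product_eq_implies_bisector
    (A B C D : EuclideanSpace ℝ (Fin 2))
    (hABC : AffineIndependent ℝ ![A, B, C])
    (hD : Sbtw ℝ B D C)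
    (hprod : (dist A B + dist B D) * (dist A C - dist C D) = dist A D ^ 2) :
    ∠ B A D = ∠ D A C := by
  have hncol : ¬ Collinear ℝ ({A, B, C} : Set (EuclideanSpace ℝ (Fin 2))) := by
    rw [← affineIndependent_iff_not_collinear_set]; exact hABC
  -- A ≠ D
  have hAD : A ≠ D := by
    rintro rfl
    exact hncol (by simpa [Set.insert_comm] using hD.wbtw.collinear)
  -- positivity of distances
  have hAB : A ≠ B := by
    rintro rfl
    exact hncol (by simpa using collinear_pair ℝ A C)
  have hAC : A ≠ C := by
    rintro rfl
    refine hncol ?_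
    have h : ({A, B, A} : Set (EuclideanSpace ℝ (Fin 2))) = {B, A} := by
      rw [Set.insert_comm]; simp
    rw [h]; exact collinear_pair ℝ B A
  have hc : 0 < dist A B := dist_pos.2 hAB
  have hb : 0 < dist A C := dist_pos.2 hAC
  have hd : 0 < dist A D := dist_pos.2 hAD
  have hm : 0 < dist B D := dist_pos.2 fun h => hD.ne_left h.symm
  have hn : 0 < dist C D := dist_pos.2 fun h => hD.ne_right h.symm
  -- BD + DC = BC
  have hsum : dist B D + dist D C = dist B C := dist_add_dist_eq_iff.2 hD.wbtw
  rw [dist_comm D C] at hsum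
  -- strict triangle inequality at B
  have htri : dist A C < dist A B + dist B C := by
    rcases lt_or_eq_of_le (dist_triangle A B C) with h | h
    · exact h
    · exact absurd (dist_add_dist_eq_iff.1 h.symm).collinear hncol
  -- angles at D
  have hπ : ∠ A D B + ∠ A D C = Real.pi :=
    angle_add_angle_eq_pi_of_angle_eq_pi A hD.angle₁₂₃_eq_pi
  have hcos : Real.cos (∠ A D C) = - Real.cos (∠ A D B) := by
    have h : ∠ A D C = Real.pi - ∠ A D B := by linarith
    rw [h, Real.cos_pi_sub]
  -- law of cosines at D
  have e1 := dist_sq_eq_dist_sq_add_dist_sq_sub_two_mul_dist_mul_dist_mul_cos_angle A D B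
  have e2 := dist_sq_eq_dist_sq_add_dist_sq_sub_two_mul_dist_mul_dist_mul_cos_angle A D C
  rw [hcos] at e2
  -- Stewart-type relation
  set b := dist A C
  set c := dist A B
  set m := dist B D
  set n := dist C D
  set d := dist A D
  set x := Real.cos (∠ A D B)
  have stewart : c * c * n + b * b * m = (d * d + m * n) * (m + n) := by
    linear_combination n * e1 + m * e2
  -- from the hypothesis, b*m = c*n
  have hkey : b * m = c * n := by
    have hfac : (b * m - c * n) * (m + n + c - b) = 0 := by
      linear_combination (m + n) * hprod - stewart
    have hpos : 0 < m + n + c - b := by linarith [htri, hsum]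
    have := mul_eq_zero.1 hfac
    rcases this with h | h
    · linarith
    · linarith
  have hbc : d * d + m * n = b * c := by
    have h1 : (d * d + m * n) * (m + n) = b * c * (m + n) := by
      linear_combination (-1 : ℝ) * stewart + (b - c) * hkey
    have h2 : 0 < m + n := by linarith
    exact mul_right_cancel₀ (ne_of_gt h2) h1
  -- law of cosines at A
  have f1 := dist_sq_eq_dist_sq_add_dist_sq_sub_two_mul_dist_mul_dist_mul_cos_angle B A D
  have f2 := dist_sq_eq_dist_sq_add_dist_sq_sub_two_mul_dist_mul_dist_mul_cos_angle D A C
  rw [dist_comm B A, dist_comm D A] at f1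
  rw [dist_comm D A, dist_comm C A, dist_comm D C] at f2
  have hcoseq : Real.cos (∠ B A D) = Real.cos (∠ D A C) := by
    have h1 : 2 * c * d * Real.cos (∠ B A D) = c * c + d * d - m * m := by
      linear_combination f1
    have h2 : 2 * d * b * Real.cos (∠ D A C) = d * d + b * b - n * n := by
      linear_combination f2
    have key : b * (c * c + d * d - m * m) = c * (d * d + b * b - n * n) := by
      linear_combination (b - c) * hbc - (m + n) * hkey
    have hcd : (2 * c * d * b : ℝ) ≠ 0 := by positivity
    apply mul_left_cancel₀ hcd
    linear_combination b * h1 - c * h2 + key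
  exact Real.injOn_cos ⟨angle_nonneg _ _ _, angle_le_pi _ _ _⟩
    ⟨angle_nonneg _ _ _, angle_le_pi _ _ _⟩ hcoseq
end

section
/- Let F₁ = (−c,0), F₂ = (c,0) be the common foci of a confocal ellipse and hyperbola satisfying αa = c², and let C = (c, b²/a) be their upper intersection. Let a ray from F₁ with positive slope meet the ellipse at A and the right branch of the hyperbola at B. Then the angles ∠AF₂C and ∠BF₂C are equal. -/
open EuclideanGeometry

set_option maxHeartbeats 1000000

/-- A point of the plane with given coordinates. -/
noncomputable def pt (x y : ℝ) : EuclideanSpace ℝ (Fin 2) :=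
  (WithLp.equiv 2 (Fin 2 → ℝ)).symm ![x, y]

lemma angle_pt (x y cx cy px py : ℝ) :
    ∠ (pt x y) (pt cx cy) (pt px py) =
    Real.arccos (((x - cx) * (px - cx) + (y - cy) * (py - cy)) /
      (Real.sqrt ((x - cx) ^ 2 + (y - cy) ^ 2) *
       Real.sqrt ((px - cx) ^ 2 + (py - cy) ^ 2))) := by
  unfold EuclideanGeometry.angle InnerProductGeometry.angle
  have h1 : ∀ u v w z : ℝ, (pt u v) -ᵥ (pt w z) = pt (u - w) (v - z) := by
    intro u v w z
    simp [pt, vsub_eq_sub]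
    ext i
    fin_cases i <;> simp
  rw [h1, h1]
  have hn : ∀ u v : ℝ, ‖pt u v‖ = Real.sqrt (u ^ 2 + v ^ 2) := by
    intro u v
    rw [EuclideanSpace.norm_eq]
    simp [pt, Fin.sum_univ_two, sq_abs]
  have hi : ∀ u v w z : ℝ, (inner ℝ (pt u v) (pt w z) : ℝ) = u * w + v * z := by
    intro u v w z
    simp [pt, PiLp.inner_apply, Fin.sum_univ_two, RCLike.inner_apply]
    ring
  rw [hn, hn, hi]

/-- For the confocal ellipse and hyperbola with foci `F₁ = (−c,0)`, `F₂ = (c,0)` and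
`αa = c²`, with `C = (c, b²/a)` the upper intersection of the two curves: if a ray from
`F₁` with positive slope `k` meets the ellipse at `A` and the right branch of the hyperbola
at `B`, then the angles `∠AF₂C` and `∠BF₂C` are equal. -/
theorem angle_ellipse_eq_angle_hyperbola
    (a b α β c k xA yA xB yB : ℝ)
    (hb : 0 < b) (hab : b < a) (hα : 0 < α) (hβ : 0 < β) (hc : 0 < c)
    (hce : c ^ 2 = a ^ 2 - b ^ 2) (hch : c ^ 2 = α ^ 2 + β ^ 2)
    (hαa : α * a = c ^ 2) (hk : 0 < k)
    (hAe : xA ^ 2 / a ^ 2 + yA ^ 2 / b ^ 2 = 1)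
    (hAr : yA = k * (xA + c)) (hAx : -c ≤ xA)
    (hBh : xB ^ 2 / α ^ 2 - yB ^ 2 / β ^ 2 = 1)
    (hBr : yB = k * (xB + c)) (hBx : α ≤ xB) :
    ∠ (pt xA yA) (pt c 0) (pt c (b ^ 2 / a)) =
    ∠ (pt xB yB) (pt c 0) (pt c (b ^ 2 / a)) := by
  have ha : 0 < a := hb.trans hab
  have ha' : a ≠ 0 := ne_of_gt ha
  have hb' : b ≠ 0 := ne_of_gt hb
  have hα' : α ≠ 0 := ne_of_gt hα
  have hβ' : β ≠ 0 := ne_of_gt hβ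
  have hA2 : b ^ 2 * xA ^ 2 + a ^ 2 * yA ^ 2 = a ^ 2 * b ^ 2 := by
    field_simp at hAe; linarith [hAe]
  have hB2 : β ^ 2 * xB ^ 2 - α ^ 2 * yB ^ 2 = α ^ 2 * β ^ 2 := by
    field_simp at hBh; linarith [hBh]
  have hca : c ^ 2 < a ^ 2 := by
    have := pow_pos hb 2
    linarith
  have hcα : α < c := by
    have hβ2 := pow_pos hβ 2
    exact lt_of_pow_lt_pow_left₀ 2 hc.le (by linarith)
  have hxB : 0 < xB := lt_of_lt_of_le hα hBx
  have hxA : -c < xA := by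
    rcases lt_or_eq_of_le hAx with h | h
    · exact h
    · exfalso
      have hy0 : yA = 0 := by rw [hAr, ← h]; ring
      rw [← h, hy0] at hA2
      have h3 : b ^ 2 * (c ^ 2 - a ^ 2) = 0 := by linear_combination hA2
      rcases mul_eq_zero.mp h3 with h4 | h4
      · exact pow_ne_zero 2 hb' h4
      · linarith
  have hyA : 0 < yA := by rw [hAr]; exact mul_pos hk (by linarith)
  have hyB : 0 < yB := by rw [hBr]; exact mul_pos hk (by linarith)
  have h1 : α ^ 2 * a ^ 2 = c ^ 4 := by linear_combination (α * a + c ^ 2) * hαa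
  have hrel : α ^ 2 * b ^ 2 = c ^ 2 * β ^ 2 := by
    linear_combination α ^ 2 * hce + c ^ 2 * hch + (α * a + c ^ 2) * hαa
  have h2 : a ^ 2 * β ^ 2 = b ^ 2 * c ^ 2 := by
    have h2' : α ^ 2 * (a ^ 2 * β ^ 2) = α ^ 2 * (b ^ 2 * c ^ 2) := by
      linear_combination β ^ 2 * h1 - c ^ 2 * hrel
    exact mul_left_cancel₀ (pow_ne_zero 2 hα') h2'
  -- ellipse quadratic at xA
  have q1 : (b ^ 2 + a ^ 2 * k ^ 2) * xA ^ 2 + 2 * a ^ 2 * k ^ 2 * c * xA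
      + (a ^ 2 * k ^ 2 * c ^ 2 - a ^ 2 * b ^ 2) = 0 := by
    rw [hAr] at hA2
    linear_combination hA2
  -- ellipse quadratic at c²/xB, cleared of denominators
  have hB2s : β ^ 2 * xB ^ 2 - α ^ 2 * (k * (xB + c)) ^ 2 = α ^ 2 * β ^ 2 := by
    rw [hBr] at hB2; exact hB2
  have q2' : α ^ 2 * ((b ^ 2 + a ^ 2 * k ^ 2) * c ^ 4 + 2 * a ^ 2 * k ^ 2 * c * c ^ 2 * xB
      + (a ^ 2 * k ^ 2 * c ^ 2 - a ^ 2 * b ^ 2) * xB ^ 2) = 0 := by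
    linear_combination -a ^ 2 * c ^ 2 * hB2s + (c ^ 2 * xB ^ 2 - α ^ 2 * c ^ 2) * h2
      - b ^ 2 * xB ^ 2 * h1
  have q2 : (b ^ 2 + a ^ 2 * k ^ 2) * c ^ 4 + 2 * a ^ 2 * k ^ 2 * c * c ^ 2 * xB
      + (a ^ 2 * k ^ 2 * c ^ 2 - a ^ 2 * b ^ 2) * xB ^ 2 = 0 :=
    (mul_eq_zero.mp q2').resolve_left (pow_ne_zero 2 hα')
  -- key: xA * xB = c²
  have hfac : (xA * xB - c ^ 2) *
      ((b ^ 2 + a ^ 2 * k ^ 2) * (xA * xB + c ^ 2) + 2 * a ^ 2 * k ^ 2 * c * xB) = 0 := by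
    linear_combination xB ^ 2 * q1 - q2
  have key : xA * xB = c ^ 2 := by
    rcases mul_eq_zero.mp hfac with h | h
    · linarith
    · exfalso
      have key2 : xB ^ 2 * (b ^ 2 * (c ^ 2 - a ^ 2)) =
          (b ^ 2 + a ^ 2 * k ^ 2) * (c * xB + c ^ 2) * (c * xB + xA * xB) := by
        linear_combination xB ^ 2 * q1 + (-(c * xB) - xA * xB) * h
      have p1 : (0:ℝ) < c * xB + c ^ 2 := by positivity
      have p2 : (0:ℝ) < c * xB + xA * xB := by
        have h5 := mul_pos hxB (show (0:ℝ) < c + xA by linarith)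
        have h6 : xB * (c + xA) = c * xB + xA * xB := by ring
        linarith
      have p3 : (0:ℝ) < b ^ 2 + a ^ 2 * k ^ 2 := by positivity
      have hpos : 0 < (b ^ 2 + a ^ 2 * k ^ 2) * (c * xB + c ^ 2) * (c * xB + xA * xB) :=
        mul_pos (mul_pos p3 p1) p2
      have hneg : xB ^ 2 * (b ^ 2 * (c ^ 2 - a ^ 2)) < 0 :=
        mul_neg_of_pos_of_neg (pow_pos hxB 2)
          (mul_neg_of_pos_of_neg (pow_pos hb 2) (by linarith))
      linarith [key2, hpos, hneg]
  -- focal radii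
  have hxAa : xA ≤ a := by
    have hy2 : 0 ≤ a ^ 2 * yA ^ 2 := by positivity
    have h4 : xA ^ 2 ≤ a ^ 2 := by
      have hb2 := pow_pos hb 2
      have hba : b ^ 2 * a ^ 2 = a ^ 2 * b ^ 2 := by ring
      have h4a : b ^ 2 * xA ^ 2 ≤ b ^ 2 * a ^ 2 := by linarith
      exact le_of_mul_le_mul_left h4a hb2
    rcases le_or_gt xA a with h | h
    · exact h
    · exfalso
      have : a ^ 2 < xA ^ 2 := by
        have h0 : 0 ≤ a := ha.le
        calc a ^ 2 = a * a := sq a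
        _ < xA * xA := mul_lt_mul' h.le h h0 (ha.trans h)
        _ = xA ^ 2 := (sq xA).symm
      linarith
  have hrApos : 0 < a - c * xA / a := by
    rw [sub_pos, div_lt_iff₀ ha]
    have h5 : c * xA ≤ c * a := mul_le_mul_of_nonneg_left hxAa hc.le
    have h6 : c < a := lt_of_pow_lt_pow_left₀ 2 ha.le hca
    have h7 : c * a < a * a := mul_lt_mul_of_pos_right h6 ha
    linarith
  have hrA : Real.sqrt ((xA - c) ^ 2 + yA ^ 2) = a - c * xA / a := by
    rw [show (xA - c) ^ 2 + yA ^ 2 = (a - c * xA / a) ^ 2 by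
      have h : a ^ 2 * ((xA - c) ^ 2 + yA ^ 2) = (a ^ 2 - c * xA) ^ 2 := by
        linear_combination hA2 + (a ^ 2 - xA ^ 2) * hce
      field_simp
      linear_combination h]
    exact Real.sqrt_sq hrApos.le
  have hrBpos : 0 < c * xB / α - α := by
    rw [sub_pos, lt_div_iff₀ hα]
    have h5 : α * α < c * α := mul_lt_mul_of_pos_right hcα hα
    have h6 : c * α ≤ c * xB := mul_le_mul_of_nonneg_left hBx hc.le
    linarith
  have hrB : Real.sqrt ((xB - c) ^ 2 + yB ^ 2) = c * xB / α - α := by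
    rw [show (xB - c) ^ 2 + yB ^ 2 = (c * xB / α - α) ^ 2 by
      have h : α ^ 2 * ((xB - c) ^ 2 + yB ^ 2) = (c * xB - α ^ 2) ^ 2 := by
        linear_combination (α ^ 2 - xB ^ 2) * hch - hB2
      field_simp
      linear_combination h]
    exact Real.sqrt_sq hrBpos.le
  have hh : 0 < b ^ 2 / a := by positivity
  -- main ratio equality
  have hratio : yA / (a - c * xA / a) = yB / (c * xB / α - α) := by
    have hr2 : yA * (c * xB - α ^ 2) * a = yB * (a ^ 2 - c * xA) * α := by
      rw [hAr, hBr]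
      linear_combination k * c * (a + α) * key + (-(k * (α * xA + a * xB)) - k * c * (a + α)) * hαa
    rw [div_eq_div_iff hrApos.ne' hrBpos.ne']
    field_simp
    linear_combination hr2
  rw [angle_pt, angle_pt]
  congr 1
  have hsq : Real.sqrt ((c - c) ^ 2 + (b ^ 2 / a - 0) ^ 2) = b ^ 2 / a := by
    rw [show (c - c) ^ 2 + (b ^ 2 / a - 0) ^ 2 = (b ^ 2 / a) ^ 2 by ring]
    exact Real.sqrt_sq hh.le
  rw [hsq]
  rw [show ((xA - c) * (c - c) + (yA - 0) * (b ^ 2 / a - 0)) = b ^ 2 / a * yA by ring]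
  rw [show ((xB - c) * (c - c) + (yB - 0) * (b ^ 2 / a - 0)) = b ^ 2 / a * yB by ring]
  rw [show (xA - c) ^ 2 + (yA - 0) ^ 2 = (xA - c) ^ 2 + yA ^ 2 by ring,
      show (xB - c) ^ 2 + (yB - 0) ^ 2 = (xB - c) ^ 2 + yB ^ 2 by ring]
  rw [hrA, hrB]
  rw [mul_comm (a - c * xA / a) (b ^ 2 / a), mul_comm (c * xB / α - α) (b ^ 2 / a)]
  rw [mul_div_mul_left _ _ hh.ne', mul_div_mul_left _ _ hh.ne']
  exact hratio
end

section
/- Let A be the intersection of the ray y = k(x+c), x ≥ −c, k > 0, with the upper half of the ellipse x²/a² + y²/b² = 1 (a = κc, b = c√(κ²−1), 1 < κ < 2). Then |F₁A| < |F₁F₂| = 2c if and only if k > k_min = (κ−1)√(4−(κ−1)²)/(2−(κ−1)²). -/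
/-- Let `A = (xA, yA)` be the intersection of the ray `y = k(x+c)`, `k > 0`, with the upper
half of the ellipse `x²/a² + y²/b² = 1`, where `a = κc`, `b = c√(κ²−1)`, `1 < κ < 2`. Then
`|F₁A| < |F₁F₂| = 2c` if and only if `k > k_min = (κ−1)√(4−(κ−1)²)/(2−(κ−1)²)`. -/
theorem focal_distance_lt_iff_slope
    (c κ a b k xA yA : ℝ) (hc : 0 < c) (hκ1 : 1 < κ) (hκ2 : κ < 2)
    (ha : a = κ * c) (hb : b = c * Real.sqrt (κ ^ 2 - 1)) (hk : 0 < k)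
    (hA : xA ^ 2 / a ^ 2 + yA ^ 2 / b ^ 2 = 1)
    (hAr : yA = k * (xA + c)) (hAy : 0 < yA) :
    Real.sqrt ((xA + c) ^ 2 + yA ^ 2) < 2 * c ↔
      (κ - 1) * Real.sqrt (4 - (κ - 1) ^ 2) / (2 - (κ - 1) ^ 2) < k := by
  have hκ2' : (0:ℝ) < κ^2 - 1 := by nlinarith only [hκ1]
  have ha2 : a^2 = κ^2*c^2 := by rw [ha]; ring
  have hb2 : b^2 = c^2*(κ^2-1) := by rw [hb, mul_pow, Real.sq_sqrt hκ2'.le]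
  have ha0 : a ≠ 0 := by rw [ha]; exact (mul_pos (by linarith) hc).ne'
  have hb0 : b ≠ 0 := by rw [hb]; exact (mul_pos hc (Real.sqrt_pos.mpr hκ2')).ne'
  have key : xA^2 * b^2 + yA^2 * a^2 = a^2*b^2 := by
    field_simp at hA
    linear_combination hA
  rw [ha2, hb2] at key
  have hc2 : (c^2 : ℝ) ≠ 0 := pow_ne_zero 2 hc.ne'
  have hE : (κ^2-1)*xA^2 + κ^2*yA^2 = κ^2*(κ^2-1)*c^2 := by
    apply mul_left_cancel₀ hc2
    linear_combination key
  have hQ : ((κ^2-1) + κ^2*k^2)*(xA+c)^2 - 2*(κ^2-1)*c*(xA+c) - (κ^2-1)^2*c^2 = 0 := by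
    linear_combination hE - κ^2*(yA + k*(xA+c))*hAr
  set u := xA + c with hu
  have hu0 : 0 < u := by nlinarith only [hAy, hAr, hk]
  have hD : (0:ℝ) < 2 - (κ-1)^2 := by nlinarith only [hκ1, hκ2]
  have hw0' : (0:ℝ) < 4 - (κ-1)^2 := by nlinarith only [hκ1, hκ2]
  set w := Real.sqrt (4 - (κ - 1) ^ 2) with hw
  have hw2 : w^2 = 4 - (κ-1)^2 := Real.sq_sqrt hw0'.le
  have hw0 : 0 < w := Real.sqrt_pos.mpr hw0'
  set s := Real.sqrt (1 + k^2) with hs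
  have hs2 : s^2 = 1 + k^2 := Real.sq_sqrt (by positivity)
  have hs0 : 0 < s := Real.sqrt_pos.mpr (by positivity)
  have hs1 : 1 < s := by
    have h1 : (1:ℝ) < 1 + k^2 := by nlinarith only [hk]
    calc (1:ℝ) = Real.sqrt 1 := Real.sqrt_one.symm
      _ < s := Real.sqrt_lt_sqrt (by norm_num) h1
  have hL : Real.sqrt (u^2 + yA^2) = u * s := by
    rw [show u^2 + yA^2 = (u*s)^2 by rw [hAr]; linear_combination (-(u^2)) * hs2]
    exact Real.sqrt_sq (mul_pos hu0 hs0).le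
  rw [hL, div_lt_iff₀ hD]
  have hm : (κ^2*s^2-1)*(u*s)^2 - 2*(κ^2-1)*c*s*(u*s) - (κ^2-1)^2*c^2*s^2 = 0 := by
    linear_combination s^2*hQ + κ^2*u^2*s^2*hs2
  have hks : 1 < κ*s := by nlinarith only [hκ1, hs1]
  have hA0 : 0 < κ^2*s^2 - 1 := by nlinarith only [hks, sq_nonneg (κ*s - 1)]
  have h3' : 0 < (u*s) * ((κ^2*s^2-1)*(u*s) - 2*(κ^2-1)*c*s) := by
    nlinarith only [hm,
      mul_pos (mul_pos (mul_pos hκ2' hκ2') (mul_pos hc hc)) (mul_pos hs0 hs0)]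
  have h3 : 0 < (κ^2*s^2-1)*(u*s) - 2*(κ^2-1)*c*s := by
    nlinarith only [h3', mul_pos hu0 hs0]
  have hkk : k^2 = s^2 - 1 := by linear_combination (-1:ℝ)*hs2
  have hEq1 : k^2*(2-(κ-1)^2)^2 = (s^2-1)*(2-(κ-1)^2)^2 := by rw [hkk]
  have hEq2 : (κ-1)^2*w^2 = (κ-1)^2*(4-(κ-1)^2) := by rw [hw2]
  have hEpos : (0:ℝ) < κ^2+2*κ-1 := by nlinarith only [hκ1]
  have hEs : 0 < (κ^2+2*κ-1)*s + 2 := by nlinarith only [mul_pos hEpos hs0]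
  have htw : 0 ≤ (κ-1)*w := mul_nonneg (by linarith) hw0.le
  constructor
  · intro hlt
    have hf : 0 < (κ^2*s^2-1)*(2*c)^2 - 2*(κ^2-1)*c*s*(2*c) - (κ^2-1)^2*c^2*s^2 := by
      nlinarith only [hm, mul_pos (sub_pos.mpr hlt) h3,
        mul_pos (mul_pos hc hA0) (sub_pos.mpr hlt)]
    have hDs : 2 < (2-(κ-1)^2)*s := by
      nlinarith only [hf, mul_pos (mul_pos hc hc) hEs]
    have hsq : ((κ-1)*w)^2 < (k*(2-(κ-1)^2))^2 := by
      nlinarith only [hDs, sq_nonneg ((2-(κ-1)^2)*s - 2), hEq1, hEq2]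
    nlinarith only [hsq, mul_pos hk hD, htw]
  · intro hk0
    have hsq : ((κ-1)*w)^2 < (k*(2-(κ-1)^2))^2 := by
      nlinarith only [hk0, mul_pos hk hD, htw]
    have hDs : 2 < (2-(κ-1)^2)*s := by
      nlinarith only [hsq, hEq1, hEq2, mul_pos hD hs0]
    have hf : 0 < (κ^2*s^2-1)*(2*c)^2 - 2*(κ^2-1)*c*s*(2*c) - (κ^2-1)^2*c^2*s^2 := by
      nlinarith only [mul_pos (mul_pos (mul_pos hc hc) (sub_pos.mpr hDs)) hEs]
    have h7 : 0 < (κ^2*s^2-1)*(2*c + u*s) - 2*(κ^2-1)*c*s := by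
      nlinarith only [h3, mul_pos hA0 hc]
    have h8 : 0 < (2*c - u*s) * ((κ^2*s^2-1)*(2*c + u*s) - 2*(κ^2-1)*c*s) := by
      nlinarith only [hf, hm]
    nlinarith only [h8, h7]
end
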